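/- Gaussian integral identity with Owen's T function: for all μ ∈ ℝ, σ > 0 and c ∈ (0, σ²), 1 − ∫_0^1 τ^{−1/2}·Φ(μ/√(σ² − τc)) dτ = 1 − 2Φ(μ/√(σ² − c)) − (√(2π)·σ/√c)·φ(μ/σ)·[1 − 2Φ((μ/σ)·√(c/(σ² − c)))] − (2√(2π)·μ/√c)·T(μ/σ, √(c/(σ² − c))). -/

import Mathlib

open MeasureTheory ProbabilityTheory Real Topology Filter

/-- Standard normal CDF `Φ`. -/
noncomputable def stdNormalCDF (x : ℝ) : ℝ := ((gaussianReal 0 1) (Set.Iic x)).toReal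

/-- Standard normal PDF `φ`. -/
noncomputable def stdNormalPDF (x : ℝ) : ℝ :=
  Real.exp (-x ^ 2 / 2) / Real.sqrt (2 * Real.pi)

/-- Owen's T function `T(x,y) = (1/(2π)) ∫_0^y exp(−x²(1+z²)/2)/(1+z²) dz`. -/
noncomputable def owenT (x y : ℝ) : ℝ :=
  1 / (2 * Real.pi) * ∫ z in (0 : ℝ)..y, Real.exp (-x ^ 2 * (1 + z ^ 2) / 2) / (1 + z ^ 2)

lemma gaussian_eq_stdNormalPDF : gaussianPDFReal 0 1 = stdNormalPDF := by
  funext t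
  simp [gaussianPDFReal, stdNormalPDF, div_eq_inv_mul]

lemma continuous_stdNormalPDF : Continuous stdNormalPDF := by
  unfold stdNormalPDF; fun_prop

lemma integrable_stdNormalPDF : Integrable stdNormalPDF := by
  rw [← gaussian_eq_stdNormalPDF]; exact integrable_gaussianPDFReal 0 1

lemma total_one : ∫ t, stdNormalPDF t = 1 := by
  rw [← gaussian_eq_stdNormalPDF]; exact integral_gaussianPDFReal_eq_one 0 one_ne_zero

lemma stdNormalCDF_eq_setInt (x : ℝ) :
    stdNormalCDF x = ∫ t in Set.Iic x, stdNormalPDF t := by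
  rw [stdNormalCDF, gaussianReal_apply_eq_integral 0 one_ne_zero,
    ENNReal.toReal_ofReal (setIntegral_nonneg measurableSet_Iic
      fun t _ => gaussianPDFReal_nonneg 0 1 t), gaussian_eq_stdNormalPDF]

lemma stdNormalCDF_nonneg (x : ℝ) : 0 ≤ stdNormalCDF x := ENNReal.toReal_nonneg

lemma stdNormalCDF_le_one (x : ℝ) : stdNormalCDF x ≤ 1 := by
  rw [stdNormalCDF]
  simpa using ENNReal.toReal_mono ENNReal.one_ne_top prob_le_one

lemma stdNormalCDF_zero : stdNormalCDF 0 = 1/2 := by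
  rw [stdNormalCDF_eq_setInt]
  have heven : ∀ t, stdNormalPDF (-t) = stdNormalPDF t := by
    intro t; simp [stdNormalPDF]
  have hsym : ∫ t in Set.Iic (0:ℝ), stdNormalPDF t = ∫ t in Set.Ioi (0:ℝ), stdNormalPDF t := by
    rw [← neg_zero, ← integral_comp_neg_Iic 0 stdNormalPDF]
    simp_rw [heven, neg_zero]
  have hsplit : (∫ t in Set.Iic (0:ℝ), stdNormalPDF t) + ∫ t in Set.Ioi (0:ℝ), stdNormalPDF t
      = ∫ t, stdNormalPDF t := by
    rw [← setIntegral_union (Set.Iic_disjoint_Ioi le_rfl) measurableSet_Ioi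
      integrable_stdNormalPDF.integrableOn integrable_stdNormalPDF.integrableOn,
      Set.Iic_union_Ioi, setIntegral_univ]
  rw [total_one, ← hsym] at hsplit
  linarith

lemma stdNormalCDF_eq (x : ℝ) :
    stdNormalCDF x = 1/2 + ∫ t in (0:ℝ)..x, stdNormalPDF t := by
  rw [← intervalIntegral.integral_Iic_sub_Iic integrable_stdNormalPDF.integrableOn
    integrable_stdNormalPDF.integrableOn, ← stdNormalCDF_eq_setInt, ← stdNormalCDF_eq_setInt,
    stdNormalCDF_zero]
  ring

lemma hasDerivAt_stdNormalCDF (x : ℝ) : HasDerivAt stdNormalCDF (stdNormalPDF x) x := by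
  have : stdNormalCDF = fun x => 1/2 + ∫ t in (0:ℝ)..x, stdNormalPDF t := funext stdNormalCDF_eq
  rw [this]
  exact (intervalIntegral.integral_hasDerivAt_right
    (continuous_stdNormalPDF.intervalIntegrable 0 x)
    continuous_stdNormalPDF.stronglyMeasurable.stronglyMeasurableAtFilter
    continuous_stdNormalPDF.continuousAt).const_add _

lemma continuous_stdNormalCDF : Continuous stdNormalCDF := by
  have : Differentiable ℝ stdNormalCDF := fun x => (hasDerivAt_stdNormalCDF x).differentiableAt
  exact this.continuous

lemma hasDerivAt_owenT (x y : ℝ) :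
    HasDerivAt (owenT x)
      (1/(2*Real.pi) * (Real.exp (-x^2*(1+y^2)/2)/(1+y^2))) y := by
  have hcont : Continuous fun z : ℝ => Real.exp (-x^2*(1+z^2)/2)/(1+z^2) := by
    apply Continuous.div (by fun_prop) (by fun_prop)
    intro z; positivity
  exact (intervalIntegral.integral_hasDerivAt_right (hcont.intervalIntegrable 0 y)
    hcont.stronglyMeasurable.stronglyMeasurableAtFilter hcont.continuousAt).const_mul _

lemma main_deriv (μ σ c : ℝ) (hσ : 0 < σ) (hc0 : 0 < c) {s : ℝ}
    (hrs : 0 < σ^2 - s^2*c) :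
    HasDerivAt (fun t : ℝ => 2*t*stdNormalCDF (μ / Real.sqrt (σ^2 - t^2*c))
      + Real.sqrt (2*Real.pi)*σ/Real.sqrt c * stdNormalPDF (μ/σ)
          * (1 - 2*stdNormalCDF (μ/σ * (Real.sqrt c * t / Real.sqrt (σ^2 - t^2*c))))
      + 2*Real.sqrt (2*Real.pi)*μ/Real.sqrt c
          * owenT (μ/σ) (Real.sqrt c * t / Real.sqrt (σ^2 - t^2*c)))
      (2 * stdNormalCDF (μ / Real.sqrt (σ^2 - s^2*c))) s := by
  have hπ : (0:ℝ) < 2*Real.pi := by positivity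
  have hsr : 0 < Real.sqrt (σ^2 - s^2*c) := Real.sqrt_pos.mpr hrs
  have hsr2 : (Real.sqrt (σ^2 - s^2*c))^2 = σ^2 - s^2*c := Real.sq_sqrt hrs.le
  have hsc : 0 < Real.sqrt c := Real.sqrt_pos.mpr hc0
  have hsc2 : (Real.sqrt c)^2 = c := Real.sq_sqrt hc0.le
  have hq : 0 < Real.sqrt (2*Real.pi) := Real.sqrt_pos.mpr hπ
  have hq2 : (Real.sqrt (2*Real.pi))^2 = 2*Real.pi := Real.sq_sqrt hπ.le
  set sr := Real.sqrt (σ^2 - s^2*c) with hsrdef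
  set sc := Real.sqrt c with hscdef
  set q := Real.sqrt (2*Real.pi) with hqdef
  -- derivative of inner function
  have h1 : HasDerivAt (fun t : ℝ => σ^2 - t^2*c) (-(2*s*c)) s := by
    simpa using ((hasDerivAt_pow 2 s).mul_const c).const_sub (σ^2)
  have h2 : HasDerivAt (fun t : ℝ => Real.sqrt (σ^2 - t^2*c)) (1/(2*sr) * -(2*s*c)) s :=
    (Real.hasDerivAt_sqrt hrs.ne').comp s h1
  have h3 : HasDerivAt (fun t : ℝ => (Real.sqrt (σ^2 - t^2*c))⁻¹) (s*c/sr^3) s := by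
    have h := h2.inv hsr.ne'
    convert h using 1
    · rfl
    · rfl
    · rfl
    rw [← hsrdef]
    field_simp
  have hu : HasDerivAt (fun t : ℝ => μ / Real.sqrt (σ^2 - t^2*c)) (μ*s*c/sr^3) s := by
    have h := h3.const_mul μ
    simp only [← div_eq_mul_inv] at h
    convert h using 1
    · rfl
    · rfl
    ring
  have hΦu : HasDerivAt (fun t : ℝ => stdNormalCDF (μ / Real.sqrt (σ^2 - t^2*c)))
      (stdNormalPDF (μ/sr) * (μ*s*c/sr^3)) s := (hasDerivAt_stdNormalCDF _).comp s hu
  have ha : HasDerivAt (fun t : ℝ => Real.sqrt c * t / Real.sqrt (σ^2 - t^2*c))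
      (sc*σ^2/sr^3) s := by
    have h := ((hasDerivAt_id s).const_mul (Real.sqrt c)).mul h3
    simp only [← div_eq_mul_inv] at h
    convert h using 1
    · rfl
    · rfl
    · rfl
    rw [← hsrdef, ← hscdef, show σ^2 = sr^2 + s^2*c by linarith]
    field_simp
    simp only [id_eq]
    ring
  have hha : HasDerivAt (fun t : ℝ => μ/σ * (Real.sqrt c * t / Real.sqrt (σ^2 - t^2*c)))
      (μ/σ * (sc*σ^2/sr^3)) s := ha.const_mul (μ/σ)
  have hΦa : HasDerivAt
      (fun t : ℝ => stdNormalCDF (μ/σ * (Real.sqrt c * t / Real.sqrt (σ^2 - t^2*c))))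
      (stdNormalPDF (μ/σ * (sc*s/sr)) * (μ/σ * (sc*σ^2/sr^3))) s :=
    (hasDerivAt_stdNormalCDF _).comp s hha
  have hT : HasDerivAt
      (fun t : ℝ => owenT (μ/σ) (Real.sqrt c * t / Real.sqrt (σ^2 - t^2*c)))
      ((1/(2*Real.pi) * (Real.exp (-(μ/σ)^2*(1+(sc*s/sr)^2)/2)/(1+(sc*s/sr)^2)))
        * (sc*σ^2/sr^3)) s :=
    (hasDerivAt_owenT (μ/σ) _).comp s ha
  -- assemble
  have hG := ((((hasDerivAt_id s).const_mul 2).mul hΦu).add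
      (((hΦa.const_mul 2).const_sub 1).const_mul (q*σ/sc * stdNormalPDF (μ/σ)))).add
      (hT.const_mul (2*q*μ/sc))
  convert hG using 1
  · rfl
  · rfl
  · rfl
  -- now show the derivative value equality
  simp only [id_eq, mul_one]
  rw [← hsrdef]
  set E := rexp (-μ^2/(2*(σ^2 - s^2*c))) with hEdef
  set P := rexp (-(μ/σ)^2/2) with hPdef
  have g1 : stdNormalPDF (μ/sr) = E/q := by
    simp only [stdNormalPDF, ← hqdef, hEdef]
    congr 2
    rw [div_pow, hsr2]
    field_simp
  have g2 : stdNormalPDF (μ/σ) = P/q := by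
    simp only [stdNormalPDF, ← hqdef, hPdef]
  have g3 : stdNormalPDF (μ/σ*(sc*s/sr)) = E/(P*q) := by
    simp only [stdNormalPDF, ← hqdef]
    rw [div_eq_div_iff (by positivity) (by positivity), ← mul_assoc, hPdef, hEdef,
      ← Real.exp_add]
    congr 2
    simp only [div_pow, mul_pow]
    rw [hsr2, hsc2]
    field_simp [(show (0:ℝ) < σ^2 - c*s^2 by linarith).ne']
    ring
  have g4 : rexp (-(μ/σ)^2*(1+(sc*s/sr)^2)/2) = E := by
    rw [hEdef]
    congr 1
    simp only [div_pow, mul_pow]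
    rw [hsr2, hsc2]
    field_simp [(show (0:ℝ) < σ^2 - c*s^2 by linarith).ne']
    ring
  have g5 : 1+(sc*s/sr)^2 = σ^2/sr^2 := by
    simp only [div_pow, mul_pow]
    rw [hsr2, hsc2]
    field_simp [(show (0:ℝ) < σ^2 - c*s^2 by linarith).ne']
    ring
  rw [g1, g2, g3, g4, g5, ← hq2, show σ^2 = sr^2 + s^2*c by linarith]
  have hP : P ≠ 0 := Real.exp_ne_zero _
  field_simp
  ring

/-- **Gaussian integral identity with Owen's T function** (Lemma G.1): for all `μ ∈ ℝ`,
`σ > 0` and `c ∈ (0, σ²)`,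
`1 − ∫_0^1 τ^{−1/2} Φ(μ/√(σ²−τc)) dτ = 1 − 2Φ(μ/√(σ²−c))
  − (√(2π)σ/√c) φ(μ/σ) [1 − 2Φ((μ/σ)√(c/(σ²−c)))] − (2√(2π)μ/√c) T(μ/σ, √(c/(σ²−c)))`. -/
theorem gaussian_integral_owenT
    (μ σ c : ℝ) (hσ : 0 < σ) (hc : c ∈ Set.Ioo 0 (σ ^ 2)) :
    1 - (∫ τ in (0 : ℝ)..1, (Real.sqrt τ)⁻¹ * stdNormalCDF (μ / Real.sqrt (σ ^ 2 - τ * c))) =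
      1 - 2 * stdNormalCDF (μ / Real.sqrt (σ ^ 2 - c))
        - Real.sqrt (2 * Real.pi) * σ / Real.sqrt c * stdNormalPDF (μ / σ)
            * (1 - 2 * stdNormalCDF (μ / σ * Real.sqrt (c / (σ ^ 2 - c))))
        - 2 * Real.sqrt (2 * Real.pi) * μ / Real.sqrt c
            * owenT (μ / σ) (Real.sqrt (c / (σ ^ 2 - c))) := by
  obtain ⟨hc0, hcσ⟩ := hc
  set G : ℝ → ℝ := fun t : ℝ => 2*t*stdNormalCDF (μ / Real.sqrt (σ^2 - t^2*c))
      + Real.sqrt (2*Real.pi)*σ/Real.sqrt c * stdNormalPDF (μ/σ)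
          * (1 - 2*stdNormalCDF (μ/σ * (Real.sqrt c * t / Real.sqrt (σ^2 - t^2*c))))
      + 2*Real.sqrt (2*Real.pi)*μ/Real.sqrt c
          * owenT (μ/σ) (Real.sqrt c * t / Real.sqrt (σ^2 - t^2*c)) with hGdef
  set f : ℝ → ℝ := fun τ => (Real.sqrt τ)⁻¹ * stdNormalCDF (μ / Real.sqrt (σ ^ 2 - τ * c))
    with hfdef
  have hG : ∀ x : ℝ, x^2 ≤ 1 → HasDerivAt G (2 * stdNormalCDF (μ / Real.sqrt (σ^2 - x^2*c))) x :=
    fun x hx => main_deriv μ σ c hσ hc0 (by nlinarith)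
  -- interval integrability of f on [0,1]
  have hfm : Measurable f := by
    apply Measurable.mul
    · exact continuous_sqrt.measurable.inv
    · exact continuous_stdNormalCDF.measurable.comp
        (measurable_const.div (continuous_sqrt.measurable.comp (by fun_prop)))
  have hrpow : IntervalIntegrable (fun τ : ℝ => τ ^ (-(1/2) : ℝ)) volume 0 1 :=
    intervalIntegral.intervalIntegrable_rpow' (by norm_num)
  have hfint : IntervalIntegrable f volume 0 1 := by
    apply hrpow.mono_fun hfm.aestronglyMeasurable
    rw [Set.uIoc_of_le (by norm_num : (0:ℝ) ≤ 1)]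
    filter_upwards [ae_restrict_mem measurableSet_Ioc] with τ hτ
    have hτ0 : 0 < τ := hτ.1
    have h1 : (Real.sqrt τ)⁻¹ = τ ^ (-(1/2) : ℝ) := by
      rw [Real.rpow_neg hτ0.le, Real.sqrt_eq_rpow]
    simp only [hfdef, norm_mul, Real.norm_eq_abs]
    rw [abs_of_nonneg (stdNormalCDF_nonneg _), abs_of_nonneg (by positivity), h1,
      abs_of_nonneg (Real.rpow_nonneg hτ0.le _)]
    nth_rewrite 2 [← mul_one (τ ^ (-(1/2):ℝ))]
    exact mul_le_mul_of_nonneg_left (stdNormalCDF_le_one _) (Real.rpow_nonneg hτ0.le _)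
  -- FTC on [ε, 1]
  have hFTC : ∀ ε : ℝ, ε ∈ Set.Ioc (0:ℝ) 1 →
      (∫ τ in ε..1, f τ) = G 1 - G (Real.sqrt ε) := by
    intro ε hε
    have h1 : ∀ x ∈ Set.uIcc ε 1, HasDerivAt (fun τ => G (Real.sqrt τ)) (f x) x := by
      intro x hx
      rw [Set.uIcc_of_le hε.2] at hx
      have hx0 : 0 < x := lt_of_lt_of_le hε.1 hx.1
      have hsq : HasDerivAt Real.sqrt (1/(2*Real.sqrt x)) x := Real.hasDerivAt_sqrt hx0.ne'
      have hsx : (Real.sqrt x)^2 = x := Real.sq_sqrt hx0.le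
      have hGx := hG (Real.sqrt x) (by rw [hsx]; exact hx.2)
      have := hGx.comp x hsq
      rw [hsx] at this
      convert this using 1
      · rfl
      · rfl
      · rfl
      rw [hfdef]
      have : 0 < Real.sqrt x := Real.sqrt_pos.mpr hx0
      field_simp
    have hsub : Set.uIcc ε 1 ⊆ Set.uIcc (0:ℝ) 1 := by
      rw [Set.uIcc_of_le hε.2, Set.uIcc_of_le (by norm_num : (0:ℝ) ≤ 1)]
      exact Set.Icc_subset_Icc hε.1.le le_rfl
    have hres := intervalIntegral.integral_eq_sub_of_hasDerivAt h1 (hfint.mono_set hsub)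
    rwa [Real.sqrt_one] at hres
  -- limit as ε → 0⁺
  have hne : (𝓝[Set.Ioc (0:ℝ) 1] 0).NeBot := left_nhdsWithin_Ioc_neBot (by norm_num)
  have hint01 : (∫ τ in (0:ℝ)..1, f τ) = G 1 - G 0 := by
    have htend1 : Filter.Tendsto (fun ε => ∫ τ in ε..1, f τ) (𝓝[Set.Ioc (0:ℝ) 1] 0)
        (𝓝 (∫ τ in (0:ℝ)..1, f τ)) := by
      have hco := intervalIntegral.continuousOn_primitive_interval_left
        (μ := volume) (f := f) (a := 0) (b := 1)
        (by rw [Set.uIcc_of_le (by norm_num : (0:ℝ) ≤ 1)]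
            exact (intervalIntegrable_iff_integrableOn_Icc_of_le (by norm_num)).mp hfint)
      have h0 : (0:ℝ) ∈ Set.uIcc (0:ℝ) 1 := Set.left_mem_uIcc
      have := (hco 0 h0).tendsto
      refine this.mono_left ?_
      rw [Set.uIcc_of_le (by norm_num : (0:ℝ) ≤ 1)]
      exact nhdsWithin_mono 0 Set.Ioc_subset_Icc_self
    have htend2 : Filter.Tendsto (fun ε => G 1 - G (Real.sqrt ε)) (𝓝[Set.Ioc (0:ℝ) 1] 0)
        (𝓝 (G 1 - G 0)) := by
      have hGc : ContinuousAt G 0 := (hG 0 (by norm_num)).differentiableAt.continuousAt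
      have : Filter.Tendsto (fun ε : ℝ => G (Real.sqrt ε)) (𝓝 0) (𝓝 (G 0)) := by
        have h1 : Filter.Tendsto Real.sqrt (𝓝 (0:ℝ)) (𝓝 0) := by
          have := continuous_sqrt.tendsto 0
          rwa [Real.sqrt_zero] at this
        exact hGc.tendsto.comp h1
      exact Filter.Tendsto.sub tendsto_const_nhds (this.mono_left nhdsWithin_le_nhds)
    have heq : ∀ᶠ ε in 𝓝[Set.Ioc (0:ℝ) 1] 0, (∫ τ in ε..1, f τ) = G 1 - G (Real.sqrt ε) := by
      filter_upwards [eventually_mem_nhdsWithin] with ε hε using hFTC ε hε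
    exact tendsto_nhds_unique (htend1.congr' heq) htend2
  -- evaluate G 0 and G 1
  have hG0 : G 0 = 0 := by
    have h0 : Real.sqrt c * 0 / Real.sqrt (σ^2 - 0^2*c) = 0 := by ring
    simp only [hGdef, h0, mul_zero, zero_mul, stdNormalCDF_zero, owenT,
      intervalIntegral.integral_same]
    norm_num
    right
    rw [stdNormalCDF_zero]
    norm_num
  have hG1 : G 1 = 2 * stdNormalCDF (μ / Real.sqrt (σ ^ 2 - c))
        + Real.sqrt (2 * Real.pi) * σ / Real.sqrt c * stdNormalPDF (μ / σ)
            * (1 - 2 * stdNormalCDF (μ / σ * Real.sqrt (c / (σ ^ 2 - c))))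
        + 2 * Real.sqrt (2 * Real.pi) * μ / Real.sqrt c
            * owenT (μ / σ) (Real.sqrt (c / (σ ^ 2 - c))) := by
    have h1 : σ^2 - 1^2*c = σ^2 - c := by ring
    have h2 : Real.sqrt c * 1 / Real.sqrt (σ^2 - 1^2*c) = Real.sqrt (c / (σ ^ 2 - c)) := by
      rw [h1, Real.sqrt_div hc0.le, mul_one]
    simp only [hGdef]
    rw [h2, h1, mul_one]
  rw [hint01, hG0, hG1]
  ring
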